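/- Let p, q > 0, let 0 < k₁ < k₂, and set κ = (k₁/k₂)^p. Let b₁, b₂ satisfy b₁ + b₂ = 2 and 0 < b₁ < 1 < b₂ < 2 (the case where the high-complexity subregion is the larger one). If κ < (b₁/b₂)^{q+1}, then there exists a₁ ∈ (0, b₁), with a₂ := 2 − a₁, such that κ·a₁^{-q} + a₂^{-q} ≤ κ·b₁^{-q} + b₂^{-q}. -/

import Mathlib

lemma mmpde_strict_mono_aux (q κ : ℝ) (hq : 0 < q) (hκ0 : 0 < κ)
    (a₀ b₁ : ℝ) (ha₀ : 0 < a₀) (hab : a₀ < b₁) (hb₁1 : b₁ < 1)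
    (hkey : ∀ a ∈ Set.Icc a₀ b₁, κ * (2 - a) ^ (q + 1) < a ^ (q + 1)) :
    κ * a₀ ^ (-q) + (2 - a₀) ^ (-q) < κ * b₁ ^ (-q) + (2 - b₁) ^ (-q) := by
  set f : ℝ → ℝ := fun a => κ * a ^ (-q) + (2 - a) ^ (-q) with hf
  have hpos : ∀ a ∈ Set.Icc a₀ b₁, 0 < a ∧ 0 < 2 - a := by
    intro a ha
    exact ⟨lt_of_lt_of_le ha₀ ha.1, by nlinarith [ha.2]⟩
  have hderiv : ∀ a ∈ Set.Ioo a₀ b₁,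
      HasDerivAt f (κ * (-q * a ^ (-q - 1)) + q * (2 - a) ^ (-q - 1)) a := by
    intro a ha
    obtain ⟨h1, h2⟩ := hpos a ⟨ha.1.le, ha.2.le⟩
    have d1 : HasDerivAt (fun x : ℝ => x ^ (-q)) (-q * a ^ (-q - 1)) a :=
      Real.hasDerivAt_rpow_const (Or.inl h1.ne')
    have d2' : HasDerivAt (fun x : ℝ => (2 - x)) (-1) a := by
      simpa using (hasDerivAt_id' a).const_sub (2:ℝ)
    have d2'' : HasDerivAt (fun y : ℝ => y ^ (-q)) (-q * (2 - a) ^ (-q - 1)) (2 - a) :=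
      Real.hasDerivAt_rpow_const (Or.inl h2.ne')
    have d2 : HasDerivAt (fun x : ℝ => (2 - x) ^ (-q)) ((-q * (2 - a) ^ (-q - 1)) * (-1)) a :=
      d2''.comp a d2'
    have := (d1.const_mul κ).add d2
    exact this.congr_deriv (by ring)
  have hderivpos : ∀ a ∈ Set.Ioo a₀ b₁,
      0 < κ * (-q * a ^ (-q - 1)) + q * (2 - a) ^ (-q - 1) := by
    intro a ha
    obtain ⟨h1, h2⟩ := hpos a ⟨ha.1.le, ha.2.le⟩
    have hk := hkey a ⟨ha.1.le, ha.2.le⟩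
    have e1 : a ^ (-q - 1) = (a ^ (q + 1))⁻¹ := by
      rw [← Real.rpow_neg h1.le]; ring_nf
    have e2 : (2 - a) ^ (-q - 1) = ((2 - a) ^ (q + 1))⁻¹ := by
      rw [← Real.rpow_neg h2.le]; ring_nf
    have p1 : (0:ℝ) < a ^ (q + 1) := Real.rpow_pos_of_pos h1 _
    have p2 : (0:ℝ) < (2 - a) ^ (q + 1) := Real.rpow_pos_of_pos h2 _
    have : κ * (a ^ (q + 1))⁻¹ < ((2 - a) ^ (q + 1))⁻¹ := by
      rw [mul_inv_lt_iff₀ p1, inv_mul_eq_div, lt_div_iff₀ p2]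
      linarith
    rw [e1, e2]
    nlinarith
  have hcont : ContinuousOn f (Set.Icc a₀ b₁) := by
    intro a ha
    obtain ⟨h1, h2⟩ := hpos a ha
    have c1 : ContinuousAt (fun x : ℝ => x ^ (-q)) a :=
      Real.continuousAt_rpow_const a (-q) (Or.inl h1.ne')
    have c2 : ContinuousAt (fun x : ℝ => (2 - x) ^ (-q)) a := by
      have : ContinuousAt (fun y : ℝ => y ^ (-q)) (2 - a) :=
        Real.continuousAt_rpow_const (2 - a) (-q) (Or.inl h2.ne')
      exact this.comp (by fun_prop)
    exact (ContinuousAt.add (c1.const_mul κ) c2).continuousWithinAt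
  have hmono : StrictMonoOn f (Set.Icc a₀ b₁) := by
    apply strictMonoOn_of_deriv_pos (convex_Icc a₀ b₁) hcont
    intro a ha
    rw [interior_Icc] at ha
    rw [(hderiv a ha).deriv]
    exact hderivpos a ha
  exact hmono (Set.left_mem_Icc.2 hab.le) (Set.right_mem_Icc.2 hab.le) hab

theorem mmpde_core_inequality_extreme
    (p q k₁ k₂ b₁ b₂ : ℝ) (hp : 0 < p) (hq : 0 < q)
    (hk₁ : 0 < k₁) (hk : k₁ < k₂)
    (hbsum : b₁ + b₂ = 2) (hb₁0 : 0 < b₁) (hb₁1 : b₁ < 1) (hb₂1 : 1 < b₂) (hb₂2 : b₂ < 2)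
    (hκ : (k₁ / k₂) ^ p < (b₁ / b₂) ^ (q + 1)) :
    ∃ a₁ ∈ Set.Ioo (0 : ℝ) b₁,
      (k₁ / k₂) ^ p * a₁ ^ (-q) + (2 - a₁) ^ (-q) ≤
        (k₁ / k₂) ^ p * b₁ ^ (-q) + b₂ ^ (-q) := by
  have hb₂ : b₂ = 2 - b₁ := by linarith
  set κ := (k₁ / k₂) ^ p with hκdef
  have hκ0 : 0 < κ := Real.rpow_pos_of_pos (div_pos hk₁ (hk₁.trans hk)) _
  have hq1 : 0 < q + 1 := by linarith
  set r := κ ^ (1 / (q + 1)) with hrdef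
  have hr0 : 0 < r := Real.rpow_pos_of_pos hκ0 _
  have hrq : r ^ (q + 1) = κ := by
    rw [hrdef, ← Real.rpow_mul hκ0.le, one_div, inv_mul_cancel₀ hq1.ne', Real.rpow_one]
  have hb₂0 : 0 < b₂ := by linarith
  have hrlt : r < b₁ / b₂ := by
    have h := Real.rpow_lt_rpow hκ0.le hκ (one_div_pos.mpr hq1)
    have hR : ((b₁ / b₂) ^ (q + 1)) ^ (1 / (q + 1)) = b₁ / b₂ := by
      rw [← Real.rpow_mul (le_of_lt (div_pos hb₁0 hb₂0)), mul_one_div,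
        div_self hq1.ne', Real.rpow_one]
    rw [hR] at h
    exact h
  -- 2r/(1+r) < b₁
  have hfrac : 2 * r / (1 + r) < b₁ := by
    rw [div_lt_iff₀ (by positivity)]
    have h2 : r * b₂ < b₁ := (lt_div_iff₀ hb₂0).mp hrlt
    nlinarith
  set a₀ := (2 * r / (1 + r) + b₁) / 2 with ha₀def
  have ha₀pos : 0 < a₀ := by positivity
  have ha₀lt : a₀ < b₁ := by rw [ha₀def]; linarith
  have ha₀gt : 2 * r / (1 + r) < a₀ := by rw [ha₀def]; linarith
  have hkey : ∀ a ∈ Set.Icc a₀ b₁, κ * (2 - a) ^ (q + 1) < a ^ (q + 1) := by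
    intro a ha
    have ha1 : 0 < a := lt_of_lt_of_le ha₀pos ha.1
    have ha2 : 0 < 2 - a := by nlinarith [ha.2]
    have hra : r * (2 - a) < a := by
      have h1 : 2 * r < a₀ * (1 + r) := by
        rw [div_lt_iff₀ (by positivity)] at ha₀gt; linarith
      nlinarith [ha.1, hr0]
    have : (r * (2 - a)) ^ (q + 1) < a ^ (q + 1) :=
      Real.rpow_lt_rpow (by positivity) hra hq1
    rwa [Real.mul_rpow hr0.le ha2.le, hrq] at this
  have := mmpde_strict_mono_aux q κ hq hκ0 a₀ b₁ ha₀pos ha₀lt hb₁1 hkey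
  exact ⟨a₀, ⟨ha₀pos, ha₀lt⟩, by rw [hb₂]; exact this.le⟩
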